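/- Let (V, C) be an E3-Occ-E2-SAT instance with n variables and m clauses, and let P be a point configuration for (V, C) in ℝ² (as defined in the context). Then for every integer w, there exists a truth assignment of the variables in V that satisfies at least w clauses of C if and only if there exists a set of 2n lines in ℝ² that cover at least 4n + w points of P. -/

import Mathlib

/-- A line in `ℝ²`: a one-dimensional affine subspace, described parametrically. -/
def IsLine (L : Set (ℝ × ℝ)) : Prop :=
  ∃ a d : ℝ × ℝ, d ≠ 0 ∧ L = {p : ℝ × ℝ | ∃ t : ℝ, p = a + t • d}

/-- Variable `i` occurs positively in clause `j`. -/
def OccursPos {n m : ℕ} (clause : Fin m → (Fin n × Bool) × (Fin n × Bool))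
    (i : Fin n) (j : Fin m) : Prop :=
  (clause j).1 = (i, true) ∨ (clause j).2 = (i, true)

/-- Variable `i` occurs negatively in clause `j`. -/
def OccursNeg {n m : ℕ} (clause : Fin m → (Fin n × Bool) × (Fin n × Bool))
    (i : Fin n) (j : Fin m) : Prop :=
  (clause j).1 = (i, false) ∨ (clause j).2 = (i, false)

/-- Assignment `g` satisfies clause `j` (a disjunction of two literals). -/
def Satisfies {n m : ℕ} (clause : Fin m → (Fin n × Bool) × (Fin n × Bool))
    (g : Fin n → Bool) (j : Fin m) : Prop :=
  g (clause j).1.1 = (clause j).1.2 ∨ g (clause j).2.1 = (clause j).2.2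

/-- An E3-Occ-E2-SAT instance: each clause has two literals on distinct variables, each
variable occurs in exactly three clauses, and each variable has both a positive and a
negative occurrence. -/
def IsE3OccE2SAT {n m : ℕ} (clause : Fin m → (Fin n × Bool) × (Fin n × Bool)) : Prop :=
  (∀ j : Fin m, (clause j).1.1 ≠ (clause j).2.1) ∧
  (∀ i : Fin n, {j : Fin m | (clause j).1.1 = i ∨ (clause j).2.1 = i}.ncard = 3) ∧
  (∀ i : Fin n, (∃ j, OccursPos clause i j) ∧ ∃ j, OccursNeg clause i j)

/-- The set `P` of `4n + m` points: four variable points per variable and one clause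
point per clause. -/
def ConfigPoints {n m : ℕ} (vpt : Fin n → Fin 4 → ℝ × ℝ) (cpt : Fin m → ℝ × ℝ) :
    Set (ℝ × ℝ) :=
  (Set.range fun x : Fin n × Fin 4 => vpt x.1 x.2) ∪ Set.range cpt

/-- The three designated collinear triples for variable `i`, given the three clauses
`tri i = (r, s, t)` in which it occurs and the flag `pos2 i` telling whether it has two
positive occurrences (in `r` and `s`) or two negative ones. -/
def DesignatedTriples {n m : ℕ} (vpt : Fin n → Fin 4 → ℝ × ℝ) (cpt : Fin m → ℝ × ℝ)
    (tri : Fin n → Fin m × Fin m × Fin m) (pos2 : Fin n → Bool) (i : Fin n) :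
    Set (Set (ℝ × ℝ)) :=
  if pos2 i then
    {{cpt (tri i).1, vpt i 0, vpt i 1}, {cpt (tri i).2.1, vpt i 2, vpt i 3},
      {cpt (tri i).2.2, vpt i 0, vpt i 2}}
  else
    {{cpt (tri i).1, vpt i 0, vpt i 2}, {cpt (tri i).2.1, vpt i 1, vpt i 3},
      {cpt (tri i).2.2, vpt i 0, vpt i 1}}

/-- `vpt`, `cpt` form a point configuration for the instance `clause`: all `4n + m`
points are distinct; for each variable the designated triples (matching its occurrence
pattern) are collinear; and no other three points of the configuration are collinear. -/
def IsPointConfig {n m : ℕ} (clause : Fin m → (Fin n × Bool) × (Fin n × Bool))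
    (vpt : Fin n → Fin 4 → ℝ × ℝ) (cpt : Fin m → ℝ × ℝ)
    (tri : Fin n → Fin m × Fin m × Fin m) (pos2 : Fin n → Bool) : Prop :=
  Function.Injective (Sum.elim (fun x : Fin n × Fin 4 => vpt x.1 x.2) cpt) ∧
  (∀ i : Fin n, (tri i).1 ≠ (tri i).2.1 ∧
    (if pos2 i then
        OccursPos clause i (tri i).1 ∧ OccursPos clause i (tri i).2.1 ∧
          OccursNeg clause i (tri i).2.2
      else
        OccursNeg clause i (tri i).1 ∧ OccursNeg clause i (tri i).2.1 ∧
          OccursPos clause i (tri i).2.2) ∧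
    ∀ S ∈ DesignatedTriples vpt cpt tri pos2 i, Collinear ℝ S) ∧
  (∀ p q r : ℝ × ℝ, p ∈ ConfigPoints vpt cpt → q ∈ ConfigPoints vpt cpt →
    r ∈ ConfigPoints vpt cpt → p ≠ q → p ≠ r → q ≠ r → Collinear ℝ {p, q, r} →
    ∃ i : Fin n, ({p, q, r} : Set (ℝ × ℝ)) ∈ DesignatedTriples vpt cpt tri pos2 i)

section Aux

/-- index of the clause of the k-th designated triple of variable i -/
def clofIdx {n m : ℕ} (tri : Fin n → Fin m × Fin m × Fin m) (i : Fin n) : Fin 3 → Fin m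
  | 0 => (tri i).1
  | 1 => (tri i).2.1
  | 2 => (tri i).2.2

/-- first variable-point index of the k-th triple -/
def idxA (b : Bool) : Fin 3 → Fin 4
  | 0 => 0
  | 1 => if b then 2 else 1
  | 2 => 0

/-- second variable-point index of the k-th triple -/
def idxB (b : Bool) : Fin 3 → Fin 4
  | 0 => if b then 1 else 2
  | 1 => 3
  | 2 => if b then 2 else 1

/-- polarity of the occurrence of variable i in its k-th designated clause -/
def polIdx {n : ℕ} (pos2 : Fin n → Bool) (i : Fin n) (k : Fin 3) : Bool :=
  if k = 2 then !(pos2 i) else pos2 i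

/-- the k-th designated triple of variable i as a set of points -/
def trip {n m : ℕ} (vpt : Fin n → Fin 4 → ℝ × ℝ) (cpt : Fin m → ℝ × ℝ)
    (tri : Fin n → Fin m × Fin m × Fin m) (pos2 : Fin n → Bool) (i : Fin n) (k : Fin 3) :
    Set (ℝ × ℝ) :=
  {cpt (clofIdx tri i k), vpt i (idxA (pos2 i) k), vpt i (idxB (pos2 i) k)}

/-- variable-point part of the k-th designated triple -/
def vpart {n : ℕ} (vpt : Fin n → Fin 4 → ℝ × ℝ) (pos2 : Fin n → Bool)
    (i : Fin n) (k : Fin 3) : Set (ℝ × ℝ) :=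
  {vpt i (idxA (pos2 i) k), vpt i (idxB (pos2 i) k)}

def OccursLit {n m : ℕ} (clause : Fin m → (Fin n × Bool) × (Fin n × Bool))
    (i : Fin n) (j : Fin m) (b : Bool) : Prop :=
  (clause j).1 = (i, b) ∨ (clause j).2 = (i, b)

variable {n m : ℕ} {clause : Fin m → (Fin n × Bool) × (Fin n × Bool)}
  {vpt : Fin n → Fin 4 → ℝ × ℝ} {cpt : Fin m → ℝ × ℝ}
  {tri : Fin n → Fin m × Fin m × Fin m} {pos2 : Fin n → Bool}

lemma mem_designated_iff {S : Set (ℝ × ℝ)} {i : Fin n} :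
    S ∈ DesignatedTriples vpt cpt tri pos2 i ↔ ∃ k : Fin 3, S = trip vpt cpt tri pos2 i k := by
  constructor
  · intro h
    cases hb : pos2 i <;> rw [DesignatedTriples, hb] at h <;> simp only [Bool.false_eq_true,
        if_false, if_true, Set.mem_insert_iff, Set.mem_singleton_iff] at h
    · rcases h with h | h | h
      exacts [⟨0, by simp [trip, clofIdx, idxA, idxB, hb, h]⟩,
        ⟨1, by simp [trip, clofIdx, idxA, idxB, hb, h]⟩,
        ⟨2, by simp [trip, clofIdx, idxA, idxB, hb, h]⟩]
    · rcases h with h | h | h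
      exacts [⟨0, by simp [trip, clofIdx, idxA, idxB, hb, h]⟩,
        ⟨1, by simp [trip, clofIdx, idxA, idxB, hb, h]⟩,
        ⟨2, by simp [trip, clofIdx, idxA, idxB, hb, h]⟩]
  · rintro ⟨k, rfl⟩
    cases hb : pos2 i <;> rw [DesignatedTriples, hb] <;> fin_cases k <;>
      simp [trip, clofIdx, idxA, idxB, hb]

lemma trip_subset_config {i : Fin n} {k : Fin 3} :
    trip vpt cpt tri pos2 i k ⊆ ConfigPoints vpt cpt := by
  intro x hx
  rcases hx with rfl | rfl | rfl
  · exact Or.inr ⟨_, rfl⟩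
  · exact Or.inl ⟨(i, idxA (pos2 i) k), rfl⟩
  · exact Or.inl ⟨(i, idxB (pos2 i) k), rfl⟩

lemma vpart_mem_config {i : Fin n} {a : Fin 4} : vpt i a ∈ ConfigPoints vpt cpt :=
  Or.inl ⟨(i, a), rfl⟩

lemma cpt_mem_config {j : Fin m} : cpt j ∈ ConfigPoints vpt cpt := Or.inr ⟨j, rfl⟩

lemma config_finite : (ConfigPoints vpt cpt).Finite :=
  (Set.finite_range _).union (Set.finite_range _)

lemma idxA_ne_idxB (b : Bool) (k : Fin 3) : idxA b k ≠ idxB b k := by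
  fin_cases k <;> cases b <;> simp [idxA, idxB]

lemma idxA_two (b : Bool) : idxA b 2 = idxA b 0 := by cases b <;> simp [idxA]

lemma idxB_two (b : Bool) : idxB b 2 = idxA b 1 := by cases b <;> simp [idxA, idxB]

end Aux
def lineThrough (p q : ℝ × ℝ) : Set (ℝ × ℝ) := {x : ℝ × ℝ | ∃ t : ℝ, x = p + t • (q - p)}

lemma isLine_lineThrough {p q : ℝ × ℝ} (h : p ≠ q) : IsLine (lineThrough p q) :=
  ⟨p, q - p, sub_ne_zero.2 (Ne.symm h), rfl⟩

lemma left_mem_lineThrough (p q : ℝ × ℝ) : p ∈ lineThrough p q := ⟨0, by simp⟩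
lemma right_mem_lineThrough (p q : ℝ × ℝ) : q ∈ lineThrough p q := ⟨1, by simp⟩

lemma collinear_of_isLine {L : Set (ℝ × ℝ)} (hL : IsLine L) : Collinear ℝ L := by
  obtain ⟨a, d, -, rfl⟩ := hL
  rw [collinear_iff_exists_forall_eq_smul_vadd]
  exact ⟨a, d, fun p ⟨t, ht⟩ => ⟨t, by simpa [ht] using add_comm a (t • d)⟩⟩

lemma subset_lineThrough_of_collinear {S : Set (ℝ × ℝ)} {p q : ℝ × ℝ}
    (hS : Collinear ℝ S) (hp : p ∈ S) (hq : q ∈ S) (hpq : p ≠ q) : S ⊆ lineThrough p q := by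
  rw [collinear_iff_exists_forall_eq_smul_vadd] at hS
  obtain ⟨p₀, v, hv⟩ := hS
  obtain ⟨r₁, hr₁⟩ := hv p hp
  obtain ⟨r₂, hr₂⟩ := hv q hq
  have hne : r₂ - r₁ ≠ 0 := by
    intro h
    apply hpq
    have : r₁ = r₂ := by linarith [sub_eq_zero.1 h]
    rw [hr₁, hr₂, this]
  intro x hx
  obtain ⟨r, hr⟩ := hv x hx
  refine ⟨(r - r₁) / (r₂ - r₁), ?_⟩
  have hq' : q - p = (r₂ - r₁) • v := by
    rw [hr₁, hr₂]; simp only [vadd_eq_add]; module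
  have h2 : ((r - r₁) / (r₂ - r₁)) • (q - p) = (r - r₁) • v := by
    rw [hq', smul_smul, div_mul_cancel₀ _ hne]
  rw [hr, h2, hr₁]; simp only [vadd_eq_add]; module

lemma lineThrough_subset_line {L : Set (ℝ × ℝ)} {p q : ℝ × ℝ}
    (hL : IsLine L) (hp : p ∈ L) (hq : q ∈ L) : lineThrough p q ⊆ L := by
  obtain ⟨a, d, -, rfl⟩ := hL
  obtain ⟨t₁, ht₁⟩ := hp
  obtain ⟨t₂, ht₂⟩ := hq
  rintro x ⟨t, rfl⟩
  refine ⟨t₁ + t * (t₂ - t₁), ?_⟩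
  rw [ht₁, ht₂]
  module

lemma eq_lineThrough {L : Set (ℝ × ℝ)} {p q : ℝ × ℝ}
    (hL : IsLine L) (hp : p ∈ L) (hq : q ∈ L) (hpq : p ≠ q) : L = lineThrough p q :=
  Set.Subset.antisymm
    (subset_lineThrough_of_collinear ((collinear_of_isLine hL)) hp hq hpq)
    (lineThrough_subset_line hL hp hq)

lemma line_unique {L L' : Set (ℝ × ℝ)} {p q : ℝ × ℝ}
    (hL : IsLine L) (hL' : IsLine L') (hp : p ∈ L) (hq : q ∈ L)
    (hp' : p ∈ L') (hq' : q ∈ L') (hpq : p ≠ q) : L = L' := by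
  rw [eq_lineThrough hL hp hq hpq, eq_lineThrough hL' hp' hq' hpq]

lemma collinear_triple_of_mem_line {L : Set (ℝ × ℝ)} (hL : IsLine L) {p q r : ℝ × ℝ}
    (hp : p ∈ L) (hq : q ∈ L) (hr : r ∈ L) : Collinear ℝ ({p, q, r} : Set (ℝ × ℝ)) :=
  (collinear_of_isLine hL).subset (by intro x hx; rcases hx with rfl | rfl | rfl <;> assumption)

lemma ncard_biUnion_le {ι α : Type*} (s : Finset ι) (f : ι → Set α)
    (hfin : ∀ i, (f i).Finite) : (⋃ i ∈ s, f i).ncard ≤ ∑ i ∈ s, (f i).ncard := by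
  classical
  induction s using Finset.induction_on with
  | empty => simp
  | @insert a s' hx ih =>
    rw [Finset.set_biUnion_insert, Finset.sum_insert hx]
    exact le_trans (Set.ncard_union_le _ _) (by omega)

section Aux2

variable {n m : ℕ} {clause : Fin m → (Fin n × Bool) × (Fin n × Bool)}
  {vpt : Fin n → Fin 4 → ℝ × ℝ} {cpt : Fin m → ℝ × ℝ}
  {tri : Fin n → Fin m × Fin m × Fin m} {pos2 : Fin n → Bool}

variable (hinj : Function.Injective (Sum.elim (fun x : Fin n × Fin 4 => vpt x.1 x.2) cpt))

include hinj

lemma vpt_inj {i i' : Fin n} {a a' : Fin 4} (h : vpt i a = vpt i' a') : i = i' ∧ a = a' := by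
  have := hinj (a₁ := Sum.inl (i, a)) (a₂ := Sum.inl (i', a')) (by simpa using h)
  simp [Prod.ext_iff] at this
  exact this

lemma vpt_ne_cpt (i : Fin n) (a : Fin 4) (j : Fin m) : vpt i a ≠ cpt j := by
  intro h
  have := hinj (a₁ := Sum.inl (i, a)) (a₂ := Sum.inr j) (by simpa using h)
  simp at this

lemma cpt_inj : Function.Injective cpt := by
  intro j j' h
  have := hinj (a₁ := Sum.inr j) (a₂ := Sum.inr j') (by simpa using h)
  simpa using this

lemma vpt_not_range (i : Fin n) (a : Fin 4) : vpt i a ∉ Set.range cpt := by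
  rintro ⟨j, hj⟩
  exact vpt_ne_cpt hinj i a j hj.symm

lemma designated_cpt_unique {i : Fin n} {S : Set (ℝ × ℝ)}
    (hS : S ∈ DesignatedTriples vpt cpt tri pos2 i) {x y : ℝ × ℝ}
    (hx : x ∈ S) (hy : y ∈ S) (hxr : x ∈ Set.range cpt) (hyr : y ∈ Set.range cpt) :
    x = y := by
  obtain ⟨k, rfl⟩ := mem_designated_iff.1 hS
  rcases hx with rfl | rfl | rfl <;> rcases hy with rfl | rfl | rfl <;>
    first
      | rfl
      | exact absurd hxr (vpt_not_range hinj _ _)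
      | exact absurd hyr (vpt_not_range hinj _ _)

omit hinj in
lemma designated_has_cpt {i : Fin n} {S : Set (ℝ × ℝ)}
    (hS : S ∈ DesignatedTriples vpt cpt tri pos2 i) :
    ∃ x ∈ S, x ∈ Set.range cpt := by
  obtain ⟨k, rfl⟩ := mem_designated_iff.1 hS
  exact ⟨cpt (clofIdx tri i k), Or.inl rfl, ⟨_, rfl⟩⟩

variable (hcol : ∀ p q r : ℝ × ℝ, p ∈ ConfigPoints vpt cpt → q ∈ ConfigPoints vpt cpt →
    r ∈ ConfigPoints vpt cpt → p ≠ q → p ≠ r → q ≠ r → Collinear ℝ {p, q, r} →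
    ∃ i : Fin n, ({p, q, r} : Set (ℝ × ℝ)) ∈ DesignatedTriples vpt cpt tri pos2 i)

include hcol

lemma no_two_cpt {p q r : ℝ × ℝ} (hp : p ∈ ConfigPoints vpt cpt)
    (hq : q ∈ ConfigPoints vpt cpt) (hr : r ∈ ConfigPoints vpt cpt)
    (hpq : p ≠ q) (hpr : p ≠ r) (hqr : q ≠ r) (hc : Collinear ℝ {p, q, r})
    (h1 : p ∈ Set.range cpt) (h2 : q ∈ Set.range cpt) : False := by
  obtain ⟨i, hdes⟩ := hcol p q r hp hq hr hpq hpr hqr hc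
  exact hpq (designated_cpt_unique hinj hdes (Or.inl rfl) (Or.inr (Or.inl rfl)) h1 h2)

omit hinj in
lemma no_all_vpt {p q r : ℝ × ℝ} (hp : p ∈ ConfigPoints vpt cpt)
    (hq : q ∈ ConfigPoints vpt cpt) (hr : r ∈ ConfigPoints vpt cpt)
    (hpq : p ≠ q) (hpr : p ≠ r) (hqr : q ≠ r) (hc : Collinear ℝ {p, q, r})
    (h1 : p ∉ Set.range cpt) (h2 : q ∉ Set.range cpt) (h3 : r ∉ Set.range cpt) : False := by
  obtain ⟨i, hdes⟩ := hcol p q r hp hq hr hpq hpr hqr hc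
  obtain ⟨x, hxS, hxr⟩ := designated_has_cpt hdes
  rcases hxS with rfl | rfl | rfl
  exacts [h1 hxr, h2 hxr, h3 hxr]

lemma four_on_line {L : Set (ℝ × ℝ)} (hL : IsLine L) {p q r s : ℝ × ℝ}
    (hp : p ∈ ConfigPoints vpt cpt) (hq : q ∈ ConfigPoints vpt cpt)
    (hr : r ∈ ConfigPoints vpt cpt) (hs : s ∈ ConfigPoints vpt cpt)
    (hpq : p ≠ q) (hpr : p ≠ r) (hps : p ≠ s) (hqr : q ≠ r) (hqs : q ≠ s) (hrs : r ≠ s)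
    (hpL : p ∈ L) (hqL : q ∈ L) (hrL : r ∈ L) (hsL : s ∈ L) : False := by
  have c : ∀ x y z : ℝ × ℝ, x ∈ L → y ∈ L → z ∈ L → Collinear ℝ ({x, y, z} : Set (ℝ × ℝ)) :=
    fun x y z hx hy hz => collinear_triple_of_mem_line hL hx hy hz
  have t_pq := fun h1 h2 => no_two_cpt hinj hcol hp hq hr hpq hpr hqr (c _ _ _ hpL hqL hrL) h1 h2
  have t_pr := fun h1 h2 => no_two_cpt hinj hcol hp hr hq hpr hpq hqr.symm (c _ _ _ hpL hrL hqL) h1 h2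
  have t_ps := fun h1 h2 => no_two_cpt hinj hcol hp hs hq hps hpq hqs.symm (c _ _ _ hpL hsL hqL) h1 h2
  have t_qr := fun h1 h2 => no_two_cpt hinj hcol hq hr hp hqr hpq.symm hpr.symm (c _ _ _ hqL hrL hpL) h1 h2
  have t_qs := fun h1 h2 => no_two_cpt hinj hcol hq hs hp hqs hpq.symm hps.symm (c _ _ _ hqL hsL hpL) h1 h2
  have t_rs := fun h1 h2 => no_two_cpt hinj hcol hr hs hp hrs hpr.symm hps.symm (c _ _ _ hrL hsL hpL) h1 h2
  have v_pqr := fun h1 h2 h3 => no_all_vpt hcol hp hq hr hpq hpr hqr (c _ _ _ hpL hqL hrL) h1 h2 h3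
  have v_pqs := fun h1 h2 h3 => no_all_vpt hcol hp hq hs hpq hps hqs (c _ _ _ hpL hqL hsL) h1 h2 h3
  have v_prs := fun h1 h2 h3 => no_all_vpt hcol hp hr hs hpr hps hrs (c _ _ _ hpL hrL hsL) h1 h2 h3
  have v_qrs := fun h1 h2 h3 => no_all_vpt hcol hq hr hs hqr hqs hrs (c _ _ _ hqL hrL hsL) h1 h2 h3
  by_cases h1 : p ∈ Set.range cpt <;> by_cases h2 : q ∈ Set.range cpt <;>
    by_cases h3 : r ∈ Set.range cpt <;> by_cases h4 : s ∈ Set.range cpt <;>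
    first
      | exact t_pq h1 h2 | exact t_pr h1 h3 | exact t_ps h1 h4
      | exact t_qr h2 h3 | exact t_qs h2 h4 | exact t_rs h3 h4
      | exact v_pqr h1 h2 h3 | exact v_pqs h1 h2 h4
      | exact v_prs h1 h3 h4 | exact v_qrs h2 h3 h4

lemma line_classify {L : Set (ℝ × ℝ)} (hL : IsLine L)
    (h3 : 3 ≤ (L ∩ ConfigPoints vpt cpt).ncard) :
    ∃ (i : Fin n) (k : Fin 3), L ∩ ConfigPoints vpt cpt = trip vpt cpt tri pos2 i k := by
  obtain ⟨t, hts, htc⟩ := Set.exists_subset_card_eq h3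
  obtain ⟨p, q, r, hpq, hpr, hqr, rfl⟩ := Set.ncard_eq_three.1 htc
  have hpm := hts (show p ∈ _ by simp)
  have hqm := hts (show q ∈ _ by simp)
  have hrm := hts (show r ∈ _ by simp)
  have hcp : Collinear ℝ ({p, q, r} : Set (ℝ × ℝ)) :=
    collinear_triple_of_mem_line hL hpm.1 hqm.1 hrm.1
  obtain ⟨i, hdes⟩ := hcol p q r hpm.2 hqm.2 hrm.2 hpq hpr hqr hcp
  obtain ⟨k, hk⟩ := mem_designated_iff.1 hdes
  refine ⟨i, k, ?_⟩
  rw [← hk]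
  refine Set.Subset.antisymm ?_ hts
  intro x hx
  by_contra hxn
  simp only [Set.mem_insert_iff, Set.mem_singleton_iff, not_or] at hxn
  exact four_on_line hinj hcol hL hpm.2 hqm.2 hrm.2 hx.2 hpq hpr
    (Ne.symm hxn.1) hqr (Ne.symm hxn.2.1) (Ne.symm hxn.2.2)
    hpm.1 hqm.1 hrm.1 hx.1

include hinj in
omit hcol in
lemma trip_ncard {i : Fin n} {k : Fin 3} : (trip vpt cpt tri pos2 i k).ncard = 3 := by
  refine Set.ncard_eq_three.2 ⟨_, _, _, ?_, ?_, ?_, rfl⟩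
  · exact (vpt_ne_cpt hinj _ _ _).symm
  · exact (vpt_ne_cpt hinj _ _ _).symm
  · intro h
    exact idxA_ne_idxB (pos2 i) k (vpt_inj hinj h).2

include hinj in
omit hcol in
lemma trip_injective {i i' : Fin n} {k k' : Fin 3}
    (h : trip vpt cpt tri pos2 i k = trip vpt cpt tri pos2 i' k') : i = i' ∧ k = k' := by
  have hii : i = i' := by
    have hmem : vpt i (idxA (pos2 i) k) ∈ trip vpt cpt tri pos2 i' k' := by
      rw [← h]; exact Or.inr (Or.inl rfl)
    rcases hmem with hc | hv | hv
    · exact absurd hc (vpt_ne_cpt hinj _ _ _)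
    · exact (vpt_inj hinj hv).1
    · exact (vpt_inj hinj hv).1
  subst hii
  refine ⟨rfl, ?_⟩
  by_contra hkk
  -- find a vpt element of trip i k not in trip i k'
  have key : ∀ a : Fin 4, vpt i a ∈ trip vpt cpt tri pos2 i k' →
      a = idxA (pos2 i) k' ∨ a = idxB (pos2 i) k' := by
    intro a ha
    rcases ha with hc | hv | hv
    · exact absurd hc (vpt_ne_cpt hinj _ _ _)
    · exact Or.inl (vpt_inj hinj hv).2
    · exact Or.inr (vpt_inj hinj hv).2
  -- pick distinguishing index
  have hBmem : vpt i (idxB (pos2 i) k) ∈ trip vpt cpt tri pos2 i k' := by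
    rw [← h]; exact Or.inr (Or.inr rfl)
  have hAmem : vpt i (idxA (pos2 i) k) ∈ trip vpt cpt tri pos2 i k' := by
    rw [← h]; exact Or.inr (Or.inl rfl)
  have hB := key _ hBmem
  have hA := key _ hAmem
  fin_cases k <;> fin_cases k' <;> cases hbb : pos2 i <;>
    simp_all [idxA, idxB] <;> omega
end Aux2

section Aux3

variable {n m : ℕ} {clause : Fin m → (Fin n × Bool) × (Fin n × Bool)}
  {vpt : Fin n → Fin 4 → ℝ × ℝ} {cpt : Fin m → ℝ × ℝ}
  {tri : Fin n → Fin m × Fin m × Fin m} {pos2 : Fin n → Bool}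

variable (hvar : ∀ i : Fin n, (tri i).1 ≠ (tri i).2.1 ∧
    (if pos2 i then
        OccursPos clause i (tri i).1 ∧ OccursPos clause i (tri i).2.1 ∧
          OccursNeg clause i (tri i).2.2
      else
        OccursNeg clause i (tri i).1 ∧ OccursNeg clause i (tri i).2.1 ∧
          OccursPos clause i (tri i).2.2) ∧
    ∀ S ∈ DesignatedTriples vpt cpt tri pos2 i, Collinear ℝ S)

include hvar

lemma trip_collinear (i : Fin n) (k : Fin 3) : Collinear ℝ (trip vpt cpt tri pos2 i k) :=
  (hvar i).2.2 _ (mem_designated_iff.2 ⟨k, rfl⟩)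

lemma occ_lit (i : Fin n) (k : Fin 3) :
    OccursLit clause i (clofIdx tri i k) (polIdx pos2 i k) := by
  have h := (hvar i).2.1
  cases hb : pos2 i <;> rw [hb] at h <;>
    simp only [Bool.false_eq_true, if_false, if_true] at h <;> fin_cases k <;>
    simp_all [OccursLit, OccursPos, OccursNeg, polIdx, clofIdx, hb]

omit hvar in
lemma satisfies_of_occLit {g : Fin n → Bool} {i : Fin n} {j : Fin m} {b : Bool}
    (h : OccursLit clause i j b) (hg : g i = b) : Satisfies clause g j := by
  rcases h with h | h
  · left; rw [h]; exact hg
  · right; rw [h]; exact hg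

omit hvar in
lemma not_occLit_both {i : Fin n} {j : Fin m}
    (h1 : OccursLit clause i j true) (h2 : OccursLit clause i j false)
    (hne : (clause j).1.1 ≠ (clause j).2.1) : False := by
  rcases h1 with h1 | h1 <;> rcases h2 with h2 | h2 <;> simp_all [Prod.ext_iff]

omit hvar in
lemma not_occLit_both' {i : Fin n} {j : Fin m} {b b' : Bool}
    (h1 : OccursLit clause i j b) (h2 : OccursLit clause i j b')
    (hne : (clause j).1.1 ≠ (clause j).2.1) (hbb : b ≠ b') : False := by
  cases b <;> cases b' <;> simp at hbb <;>
    first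
      | exact not_occLit_both h2 h1 hne
      | exact not_occLit_both h1 h2 hne

variable (hds : ∀ j : Fin m, (clause j).1.1 ≠ (clause j).2.1)
include hds

lemma clof_inj {i : Fin n} {k k' : Fin 3} (h : clofIdx tri i k = clofIdx tri i k') :
    k = k' := by
  by_contra hkk
  have hp : polIdx pos2 i k ≠ polIdx pos2 i k' ∨ (k = 0 ∧ k' = 1) ∨ (k = 1 ∧ k' = 0) := by
    fin_cases k <;> fin_cases k' <;> simp_all [polIdx] <;> cases pos2 i <;> simp
  rcases hp with hp | ⟨rfl, rfl⟩ | ⟨rfl, rfl⟩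
  · exact not_occLit_both' (occ_lit hvar i k) (h ▸ occ_lit hvar i k') (hds _) hp
  · exact (hvar i).1 h
  · exact (hvar i).1 h.symm

variable (hocc3 : ∀ i : Fin n, {j : Fin m | (clause j).1.1 = i ∨ (clause j).2.1 = i}.ncard = 3)
include hocc3

lemma occ_set_eq (i : Fin n) :
    {j : Fin m | (clause j).1.1 = i ∨ (clause j).2.1 = i} =
      {clofIdx tri i 0, clofIdx tri i 1, clofIdx tri i 2} := by
  have hmem : ∀ k : Fin 3, clofIdx tri i k ∈
      {j : Fin m | (clause j).1.1 = i ∨ (clause j).2.1 = i} := by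
    intro k
    rcases occ_lit hvar i k with h | h
    · exact Or.inl (by rw [h])
    · exact Or.inr (by rw [h])
  have hsub : ({clofIdx tri i 0, clofIdx tri i 1, clofIdx tri i 2} : Set (Fin m)) ⊆
      {j : Fin m | (clause j).1.1 = i ∨ (clause j).2.1 = i} := by
    intro x hx
    rcases hx with rfl | rfl | rfl <;> exact hmem _
  have hc3 : ({clofIdx tri i 0, clofIdx tri i 1, clofIdx tri i 2} : Set (Fin m)).ncard = 3 :=
    Set.ncard_eq_three.2 ⟨_, _, _, fun h => (by exact absurd (clof_inj hvar hds h) (by decide)),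
      fun h => (by exact absurd (clof_inj hvar hds h) (by decide)),
      fun h => (by exact absurd (clof_inj hvar hds h) (by decide)), rfl⟩
  exact (Set.eq_of_subset_of_ncard_le hsub (by rw [hocc3 i, hc3]) (Set.toFinite _)).symm

lemma occ_classify {i : Fin n} {j : Fin m} {b : Bool} (h : OccursLit clause i j b) :
    ∃ k : Fin 3, j = clofIdx tri i k ∧ b = polIdx pos2 i k := by
  have hj : j ∈ {j : Fin m | (clause j).1.1 = i ∨ (clause j).2.1 = i} := by
    rcases h with h' | h'
    · exact Or.inl (by rw [h'])
    · exact Or.inr (by rw [h'])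
  rw [occ_set_eq hvar hds hocc3 i] at hj
  have : ∃ k : Fin 3, j = clofIdx tri i k := by
    rcases hj with h' | h' | h'
    exacts [⟨0, h'⟩, ⟨1, h'⟩, ⟨2, h'⟩]
  obtain ⟨k, rfl⟩ := this
  refine ⟨k, rfl, ?_⟩
  by_contra hbb
  exact not_occLit_both' h (occ_lit hvar i k) (hds _) hbb

end Aux3

section Forward

variable {n m : ℕ} {clause : Fin m → (Fin n × Bool) × (Fin n × Bool)}
  {vpt : Fin n → Fin 4 → ℝ × ℝ} {cpt : Fin m → ℝ × ℝ}
  {tri : Fin n → Fin m × Fin m × Fin m} {pos2 : Fin n → Bool}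

/-- the two cover lines chosen for variable `i` under assignment `g` -/
def lpFun (vpt : Fin n → Fin 4 → ℝ × ℝ) (g : Fin n → Bool) (p : Fin n × Fin 2) :
    Set (ℝ × ℝ) :=
  if p.2 = 0 then lineThrough (vpt p.1 0) (vpt p.1 (if g p.1 then 1 else 2))
  else lineThrough (vpt p.1 (if g p.1 then 2 else 1)) (vpt p.1 3)

def endAIdx (g : Fin n → Bool) (p : Fin n × Fin 2) : Fin n × Fin 4 :=
  (p.1, if p.2 = 0 then 0 else if g p.1 then 2 else 1)

def endBIdx (g : Fin n → Bool) (p : Fin n × Fin 2) : Fin n × Fin 4 :=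
  (p.1, if p.2 = 0 then (if g p.1 then 1 else 2) else 3)

lemma lpFun_eq (g : Fin n → Bool) (p : Fin n × Fin 2) :
    lpFun vpt g p = lineThrough (vpt (endAIdx g p).1 (endAIdx g p).2)
      (vpt (endBIdx g p).1 (endBIdx g p).2) := by
  by_cases h : p.2 = 0 <;> simp [lpFun, endAIdx, endBIdx, h]

lemma endIdx_ne (g : Fin n → Bool) (p : Fin n × Fin 2) : endAIdx g p ≠ endBIdx g p := by
  obtain ⟨i, e⟩ := p
  fin_cases e <;> cases hg : g i <;> simp [endAIdx, endBIdx, hg]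

lemma endIdx_ne' (g : Fin n → Bool) {p p' : Fin n × Fin 2} (h : p ≠ p') :
    endAIdx g p' ≠ endAIdx g p ∧ endAIdx g p' ≠ endBIdx g p := by
  obtain ⟨i, e⟩ := p
  obtain ⟨i', e'⟩ := p'
  by_cases hi : i = i'
  · subst hi
    have he : e ≠ e' := fun h' => h (by rw [h'])
    fin_cases e <;> fin_cases e' <;> simp_all [endAIdx, endBIdx] <;>
      cases hg : g i <;> simp [hg]
  · constructor <;> exact fun hc => hi (congrArg Prod.fst hc).symm

variable (hinj : Function.Injective (Sum.elim (fun x : Fin n × Fin 4 => vpt x.1 x.2) cpt))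
include hinj

lemma lpFun_isLine (g : Fin n → Bool) (p : Fin n × Fin 2) : IsLine (lpFun vpt g p) := by
  rw [lpFun_eq]
  refine isLine_lineThrough fun h => ?_
  have := vpt_inj hinj h
  exact endIdx_ne g p (Prod.ext this.1 this.2)

variable (hcol : ∀ p q r : ℝ × ℝ, p ∈ ConfigPoints vpt cpt → q ∈ ConfigPoints vpt cpt →
    r ∈ ConfigPoints vpt cpt → p ≠ q → p ≠ r → q ≠ r → Collinear ℝ {p, q, r} →
    ∃ i : Fin n, ({p, q, r} : Set (ℝ × ℝ)) ∈ DesignatedTriples vpt cpt tri pos2 i)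

include hcol

lemma three_vpt_on_line {L : Set (ℝ × ℝ)} (hL : IsLine L) {l1 l2 l3 : Fin n × Fin 4}
    (h12 : l1 ≠ l2) (h13 : l1 ≠ l3) (h23 : l2 ≠ l3)
    (m1 : vpt l1.1 l1.2 ∈ L) (m2 : vpt l2.1 l2.2 ∈ L) (m3 : vpt l3.1 l3.2 ∈ L) : False := by
  have hd : ∀ l l' : Fin n × Fin 4, l ≠ l' → vpt l.1 l.2 ≠ vpt l'.1 l'.2 := by
    intro l l' hll hc
    exact hll (Prod.ext (vpt_inj hinj hc).1 (vpt_inj hinj hc).2)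
  exact no_all_vpt (tri := tri) (pos2 := pos2) hcol vpart_mem_config vpart_mem_config
    vpart_mem_config (hd _ _ h12) (hd _ _ h13) (hd _ _ h23)
    (collinear_triple_of_mem_line hL m1 m2 m3)
    (vpt_not_range hinj _ _) (vpt_not_range hinj _ _) (vpt_not_range hinj _ _)

lemma lpFun_injective (g : Fin n → Bool) : Function.Injective (lpFun vpt g) := by
  intro p p' hpp
  by_contra hne
  have hne' := endIdx_ne' g hne
  refine three_vpt_on_line hinj hcol (lpFun_isLine hinj g p)
    (endIdx_ne g p) (Ne.symm hne'.1) (Ne.symm hne'.2) ?_ ?_ ?_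
  · rw [lpFun_eq]; exact left_mem_lineThrough _ _
  · rw [lpFun_eq]; exact right_mem_lineThrough _ _
  · rw [hpp, lpFun_eq]; exact left_mem_lineThrough _ _

end Forward

section Forward2

variable {n m : ℕ} {clause : Fin m → (Fin n × Bool) × (Fin n × Bool)}
  {vpt : Fin n → Fin 4 → ℝ × ℝ} {cpt : Fin m → ℝ × ℝ}
  {tri : Fin n → Fin m × Fin m × Fin m} {pos2 : Fin n → Bool}

variable (hinj : Function.Injective (Sum.elim (fun x : Fin n × Fin 4 => vpt x.1 x.2) cpt))
  (hvar : ∀ i : Fin n, (tri i).1 ≠ (tri i).2.1 ∧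
    (if pos2 i then
        OccursPos clause i (tri i).1 ∧ OccursPos clause i (tri i).2.1 ∧
          OccursNeg clause i (tri i).2.2
      else
        OccursNeg clause i (tri i).1 ∧ OccursNeg clause i (tri i).2.1 ∧
          OccursPos clause i (tri i).2.2) ∧
    ∀ S ∈ DesignatedTriples vpt cpt tri pos2 i, Collinear ℝ S)

include hinj hvar

lemma matched_cov {g : Fin n → Bool} {i : Fin n} {k : Fin 3}
    (hg : g i = polIdx pos2 i k) :
    cpt (clofIdx tri i k) ∈ lpFun vpt g (i, if k = 1 then 1 else 0) := by
  have hc := trip_collinear hvar i k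
  have hAB : vpt i (idxA (pos2 i) k) ≠ vpt i (idxB (pos2 i) k) := fun h =>
    idxA_ne_idxB (pos2 i) k (vpt_inj hinj h).2
  have hsub := subset_lineThrough_of_collinear hc (Or.inr (Or.inl rfl))
    (Or.inr (Or.inr rfl)) hAB
  have hmem := hsub (Or.inl rfl)
  revert hmem
  fin_cases k <;> cases hb : pos2 i <;> simp [polIdx, hb] at hg <;>
    simp [lpFun, idxA, idxB, hb, hg]

variable (hds : ∀ j : Fin m, (clause j).1.1 ≠ (clause j).2.1)
  (hocc3 : ∀ i : Fin n, {j : Fin m | (clause j).1.1 = i ∨ (clause j).2.1 = i}.ncard = 3)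
  (hcol : ∀ p q r : ℝ × ℝ, p ∈ ConfigPoints vpt cpt → q ∈ ConfigPoints vpt cpt →
    r ∈ ConfigPoints vpt cpt → p ≠ q → p ≠ r → q ≠ r → Collinear ℝ {p, q, r} →
    ∃ i : Fin n, ({p, q, r} : Set (ℝ × ℝ)) ∈ DesignatedTriples vpt cpt tri pos2 i)

include hds hocc3 hcol

lemma forward_dir (g : Fin n → Bool) :
    ∃ Ls : Finset (Set (ℝ × ℝ)), Ls.card = 2 * n ∧ (∀ L ∈ Ls, IsLine L) ∧
      4 * n + {j : Fin m | Satisfies clause g j}.ncard ≤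
        ({p ∈ ConfigPoints vpt cpt | ∃ L ∈ Ls, p ∈ L} : Set (ℝ × ℝ)).ncard := by
  classical
  refine ⟨Finset.image (lpFun vpt g) Finset.univ, ?_, ?_, ?_⟩
  · rw [Finset.card_image_of_injective _ (lpFun_injective hinj hcol g)]
    simp [mul_comm]
  · intro L hL
    obtain ⟨p, -, rfl⟩ := Finset.mem_image.1 hL
    exact lpFun_isLine hinj g p
  · set Ls := Finset.image (lpFun vpt g) Finset.univ with hLs
    set Cov := ({p ∈ ConfigPoints vpt cpt | ∃ L ∈ Ls, p ∈ L} : Set (ℝ × ℝ)) with hCov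
    have hmemLs : ∀ p : Fin n × Fin 2, lpFun vpt g p ∈ Ls := fun p =>
      Finset.mem_image_of_mem _ (Finset.mem_univ p)
    have hvcov : ∀ (i : Fin n) (a : Fin 4), vpt i a ∈ Cov := by
      intro i a
      refine ⟨vpart_mem_config, ?_⟩
      fin_cases a <;> cases hg : g i <;>
        first
          | exact ⟨_, hmemLs (i, 0), by simp [lpFun, hg]; exact left_mem_lineThrough _ _⟩
          | exact ⟨_, hmemLs (i, 0), by simp [lpFun, hg]; exact right_mem_lineThrough _ _⟩
          | exact ⟨_, hmemLs (i, 1), by simp [lpFun, hg]; exact left_mem_lineThrough _ _⟩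
          | exact ⟨_, hmemLs (i, 1), by simp [lpFun, hg]; exact right_mem_lineThrough _ _⟩
    have hccov : ∀ j : Fin m, Satisfies clause g j → cpt j ∈ Cov := by
      intro j hj
      have hex : ∃ (i : Fin n) (b : Bool), OccursLit clause i j b ∧ g i = b := by
        rcases hj with hj | hj
        · exact ⟨(clause j).1.1, (clause j).1.2, Or.inl rfl, hj⟩
        · exact ⟨(clause j).2.1, (clause j).2.2, Or.inr rfl, hj⟩
      obtain ⟨i, b, hocc, hgb⟩ := hex
      obtain ⟨k, hk, hb⟩ := occ_classify hvar hds hocc3 hocc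
      refine ⟨cpt_mem_config, ⟨_, hmemLs (i, if k = 1 then 1 else 0), ?_⟩⟩
      rw [hk]
      exact matched_cov hinj hvar (by rw [hgb, hb])
    have hvinj : Function.Injective (fun x : Fin n × Fin 4 => vpt x.1 x.2) := by
      intro x y h
      exact Prod.ext (vpt_inj hinj h).1 (vpt_inj hinj h).2
    have hWsub : (Set.range fun x : Fin n × Fin 4 => vpt x.1 x.2) ∪
        cpt '' {j : Fin m | Satisfies clause g j} ⊆ Cov := by
      rintro x (⟨⟨i, a⟩, rfl⟩ | ⟨j, hj, rfl⟩)
      · exact hvcov i a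
      · exact hccov j hj
    have hdisj : Disjoint (Set.range fun x : Fin n × Fin 4 => vpt x.1 x.2)
        (cpt '' {j : Fin m | Satisfies clause g j}) := by
      rw [Set.disjoint_left]
      rintro x ⟨⟨i, a⟩, rfl⟩ ⟨j, -, hj⟩
      exact vpt_ne_cpt hinj i a j hj.symm
    have hfinCov : Cov.Finite := config_finite.subset fun x hx => hx.1
    have h1 : (Set.range fun x : Fin n × Fin 4 => vpt x.1 x.2).ncard = 4 * n := by
      rw [← Set.image_univ, Set.ncard_image_of_injective _ hvinj, Set.ncard_univ]
      simp [Nat.card_eq_fintype_card]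
      omega
    have h2 : (cpt '' {j : Fin m | Satisfies clause g j}).ncard =
        {j : Fin m | Satisfies clause g j}.ncard :=
      Set.ncard_image_of_injective _ (cpt_inj hinj)
    calc 4 * n + {j : Fin m | Satisfies clause g j}.ncard
        = ((Set.range fun x : Fin n × Fin 4 => vpt x.1 x.2) ∪
            cpt '' {j : Fin m | Satisfies clause g j}).ncard := by
          rw [Set.ncard_union_eq hdisj (Set.finite_range _) ((Set.toFinite _).image _), h1, h2]
      _ ≤ Cov.ncard := Set.ncard_le_ncard hWsub hfinCov

end Forward2

section Reverse

lemma ncard_pair_le {α : Type*} (a b : α) : ({a, b} : Set α).ncard ≤ 2 :=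
  (Set.ncard_insert_le _ _).trans (by simp)

lemma ncard_triple_le {α : Type*} (a b c : α) : ({a, b, c} : Set α).ncard ≤ 3 :=
  (Set.ncard_insert_le _ _).trans (by have := ncard_pair_le b c; omega)

lemma ncard_quad_le {α : Type*} (a b c d : α) : ({a, b, c, d} : Set α).ncard ≤ 4 :=
  (Set.ncard_insert_le _ _).trans (by have := ncard_triple_le b c d; omega)

variable {n m : ℕ} {clause : Fin m → (Fin n × Bool) × (Fin n × Bool)}
  {vpt : Fin n → Fin 4 → ℝ × ℝ} {cpt : Fin m → ℝ × ℝ}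
  {tri : Fin n → Fin m × Fin m × Fin m} {pos2 : Fin n → Bool}

lemma vpart_sub2 {i : Fin n} :
    vpart vpt pos2 i 2 ⊆ {vpt i (idxA (pos2 i) 0), vpt i (idxA (pos2 i) 1)} := by
  rintro x (rfl | rfl)
  · rw [idxA_two]; exact Or.inl rfl
  · rw [idxB_two]; exact Or.inr rfl

variable (hinj : Function.Injective (Sum.elim (fun x : Fin n × Fin 4 => vpt x.1 x.2) cpt))
  (hvar : ∀ i : Fin n, (tri i).1 ≠ (tri i).2.1 ∧
    (if pos2 i then
        OccursPos clause i (tri i).1 ∧ OccursPos clause i (tri i).2.1 ∧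
          OccursNeg clause i (tri i).2.2
      else
        OccursNeg clause i (tri i).1 ∧ OccursNeg clause i (tri i).2.1 ∧
          OccursPos clause i (tri i).2.2) ∧
    ∀ S ∈ DesignatedTriples vpt cpt tri pos2 i, Collinear ℝ S)
  (hcol : ∀ p q r : ℝ × ℝ, p ∈ ConfigPoints vpt cpt → q ∈ ConfigPoints vpt cpt →
    r ∈ ConfigPoints vpt cpt → p ≠ q → p ≠ r → q ≠ r → Collinear ℝ {p, q, r} →
    ∃ i : Fin n, ({p, q, r} : Set (ℝ × ℝ)) ∈ DesignatedTriples vpt cpt tri pos2 i)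

lemma per_var_bound (v4 : Fin 4 → ℝ × ℝ) (b : Bool) (sel : Fin 3 → Prop)
    [DecidablePred sel] :
    ({x : ℝ × ℝ | ∃ k : Fin 3, sel k ∧ x ∈ ({v4 (idxA b k), v4 (idxB b k)} : Set (ℝ × ℝ))}).ncard
        + (if sel 2 ∧ (sel 0 ∨ sel 1) then 1 else 0)
      ≤ 2 * (Finset.univ.filter (fun k : Fin 3 => sel k)).card := by
  classical
  set U := {x : ℝ × ℝ | ∃ k : Fin 3, sel k ∧
      x ∈ ({v4 (idxA b k), v4 (idxB b k)} : Set (ℝ × ℝ))} with hU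
  have hcardf : (Finset.univ.filter (fun k : Fin 3 => sel k)).card =
      (if sel 0 then 1 else 0) + (if sel 1 then 1 else 0) + (if sel 2 then 1 else 0) := by
    rw [Finset.card_filter, Fin.sum_univ_three]
  have hk2A : v4 (idxA b 2) = v4 (idxA b 0) := by rw [idxA_two]
  have hk2B : v4 (idxB b 2) = v4 (idxA b 1) := by rw [idxB_two]
  by_cases h0 : sel 0 <;> by_cases h1 : sel 1 <;> by_cases h2 : sel 2
  · -- TTT
    have hsub : U ⊆ {v4 (idxA b 0), v4 (idxB b 0), v4 (idxA b 1), v4 (idxB b 1)} := by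
      rintro x ⟨k, hk, hx⟩
      fin_cases k
      · rcases hx with rfl | rfl
        · exact Or.inl rfl
        · exact Or.inr (Or.inl rfl)
      · rcases hx with rfl | rfl
        · exact Or.inr (Or.inr (Or.inl rfl))
        · exact Or.inr (Or.inr (Or.inr rfl))
      · rcases hx with rfl | rfl
        · exact Or.inl (show v4 (idxA b 2) = v4 (idxA b 0) from hk2A)
        · exact Or.inr (Or.inr (Or.inl (show v4 (idxB b 2) = v4 (idxA b 1) from hk2B)))
    have := (Set.ncard_le_ncard hsub (Set.toFinite _)).trans (ncard_quad_le _ _ _ _)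
    simp only [hcardf, if_pos h0, if_pos h1, if_pos h2, if_pos (show sel 2 ∧ (sel 0 ∨ sel 1) from ⟨h2, Or.inl h0⟩)]
    omega
  · -- TTF
    have hsub : U ⊆ {v4 (idxA b 0), v4 (idxB b 0), v4 (idxA b 1), v4 (idxB b 1)} := by
      rintro x ⟨k, hk, hx⟩
      fin_cases k
      · rcases hx with rfl | rfl
        · exact Or.inl rfl
        · exact Or.inr (Or.inl rfl)
      · rcases hx with rfl | rfl
        · exact Or.inr (Or.inr (Or.inl rfl))
        · exact Or.inr (Or.inr (Or.inr rfl))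
      · exact absurd hk h2
    have := (Set.ncard_le_ncard hsub (Set.toFinite _)).trans (ncard_quad_le _ _ _ _)
    have hmis : (if sel 2 ∧ (sel 0 ∨ sel 1) then 1 else 0 : ℕ) = 0 := by
      rw [if_neg]; tauto
    simp only [hcardf, if_pos h0, if_pos h1, if_neg h2, hmis]
    omega
  · -- TFT
    have hsub : U ⊆ {v4 (idxA b 0), v4 (idxB b 0), v4 (idxA b 1)} := by
      rintro x ⟨k, hk, hx⟩
      fin_cases k
      · rcases hx with rfl | rfl
        · exact Or.inl rfl
        · exact Or.inr (Or.inl rfl)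
      · exact absurd hk h1
      · rcases hx with rfl | rfl
        · exact Or.inl (show v4 (idxA b 2) = v4 (idxA b 0) from hk2A)
        · exact Or.inr (Or.inr (show v4 (idxB b 2) = v4 (idxA b 1) from hk2B))
    have := (Set.ncard_le_ncard hsub (Set.toFinite _)).trans (ncard_triple_le _ _ _)
    simp only [hcardf, if_pos h0, if_neg h1, if_pos h2, if_pos (show sel 2 ∧ (sel 0 ∨ sel 1) from ⟨h2, Or.inl h0⟩)]
    omega
  · -- TFF
    have hsub : U ⊆ {v4 (idxA b 0), v4 (idxB b 0)} := by
      rintro x ⟨k, hk, hx⟩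
      fin_cases k
      · exact hx
      · exact absurd hk h1
      · exact absurd hk h2
    have := (Set.ncard_le_ncard hsub (Set.toFinite _)).trans (ncard_pair_le _ _)
    have hmis : (if sel 2 ∧ (sel 0 ∨ sel 1) then 1 else 0 : ℕ) = 0 := by
      rw [if_neg]; tauto
    simp only [hcardf, if_pos h0, if_neg h1, if_neg h2, hmis]
    omega
  · -- FTT
    have hsub : U ⊆ {v4 (idxA b 1), v4 (idxB b 1), v4 (idxA b 0)} := by
      rintro x ⟨k, hk, hx⟩
      fin_cases k
      · exact absurd hk h0
      · rcases hx with rfl | rfl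
        · exact Or.inl rfl
        · exact Or.inr (Or.inl rfl)
      · rcases hx with rfl | rfl
        · exact Or.inr (Or.inr (show v4 (idxA b 2) = v4 (idxA b 0) from hk2A))
        · exact Or.inl (show v4 (idxB b 2) = v4 (idxA b 1) from hk2B)
    have := (Set.ncard_le_ncard hsub (Set.toFinite _)).trans (ncard_triple_le _ _ _)
    simp only [hcardf, if_neg h0, if_pos h1, if_pos h2, if_pos (show sel 2 ∧ (sel 0 ∨ sel 1) from ⟨h2, Or.inr h1⟩)]
    omega
  · -- FTF
    have hsub : U ⊆ {v4 (idxA b 1), v4 (idxB b 1)} := by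
      rintro x ⟨k, hk, hx⟩
      fin_cases k
      · exact absurd hk h0
      · exact hx
      · exact absurd hk h2
    have := (Set.ncard_le_ncard hsub (Set.toFinite _)).trans (ncard_pair_le _ _)
    have hmis : (if sel 2 ∧ (sel 0 ∨ sel 1) then 1 else 0 : ℕ) = 0 := by
      rw [if_neg]; tauto
    simp only [hcardf, if_neg h0, if_pos h1, if_neg h2, hmis]
    omega
  · -- FFT
    have hsub : U ⊆ {v4 (idxA b 2), v4 (idxB b 2)} := by
      rintro x ⟨k, hk, hx⟩
      fin_cases k
      · exact absurd hk h0
      · exact absurd hk h1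
      · exact hx
    have := (Set.ncard_le_ncard hsub (Set.toFinite _)).trans (ncard_pair_le _ _)
    have hmis : (if sel 2 ∧ (sel 0 ∨ sel 1) then 1 else 0 : ℕ) = 0 := by
      rw [if_neg]; tauto
    simp only [hcardf, if_neg h0, if_neg h1, if_pos h2, hmis]
    omega
  · -- FFF
    have hsub : U ⊆ (∅ : Set (ℝ × ℝ)) := by
      rintro x ⟨k, hk, -⟩
      fin_cases k
      · exact absurd hk h0
      · exact absurd hk h1
      · exact absurd hk h2
    have := (Set.ncard_le_ncard hsub (Set.toFinite _))
    have hmis : (if sel 2 ∧ (sel 0 ∨ sel 1) then 1 else 0 : ℕ) = 0 := by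
      rw [if_neg]; tauto
    simp only [hcardf, if_neg h0, if_neg h1, if_neg h2, hmis]
    simp at this
    omega

include hinj hvar hcol

lemma reverse_dir (Ls : Finset (Set (ℝ × ℝ))) (hcard : Ls.card = 2 * n)
    (hlines : ∀ L ∈ Ls, IsLine L) :
    ∃ g : Fin n → Bool,
      ({p ∈ ConfigPoints vpt cpt | ∃ L ∈ Ls, p ∈ L} : Set (ℝ × ℝ)).ncard ≤
        4 * n + {j : Fin m | Satisfies clause g j}.ncard := by
  classical
  set P := ConfigPoints vpt cpt with hP
  set sel : Fin n → Fin 3 → Prop :=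
    fun i k => ∃ L ∈ Ls, L ∩ P = trip vpt cpt tri pos2 i k with hsel
  set g : Fin n → Bool := fun i => if sel i 0 ∨ sel i 1 then pos2 i else !pos2 i with hg
  refine ⟨g, ?_⟩
  set SatS : Set (Fin m) := {j : Fin m | Satisfies clause g j} with hSatS
  set MisF : Finset (Fin n) :=
    Finset.univ.filter (fun i => sel i 2 ∧ (sel i 0 ∨ sel i 1)) with hMisF
  set Uv : Fin n → Set (ℝ × ℝ) :=
    fun i => {x | ∃ k : Fin 3, sel i k ∧ x ∈ vpart vpt pos2 i k} with hUv
  set Small : Finset (Set (ℝ × ℝ)) := Ls.filter (fun L => (L ∩ P).ncard ≤ 2) with hSmall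
  set Big : Finset (Set (ℝ × ℝ)) := Ls.filter (fun L => ¬ (L ∩ P).ncard ≤ 2) with hBig
  -- matched assignment property
  have hmatch : ∀ (i : Fin n) (k : Fin 3), sel i k →
      g i = polIdx pos2 i k ∨ (k = 2 ∧ i ∈ MisF) := by
    intro i k hk
    by_cases h01 : sel i 0 ∨ sel i 1
    · have hgi : g i = pos2 i := if_pos h01
      by_cases hk2 : k = 2
      · exact Or.inr ⟨hk2, Finset.mem_filter.2 ⟨Finset.mem_univ _, hk2 ▸ hk, h01⟩⟩
      · left; rw [hgi, polIdx, if_neg hk2]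
    · have hgi : g i = !pos2 i := if_neg h01
      have hk2 : k = 2 := by
        by_contra hk2
        have hk01 : k = 0 ∨ k = 1 := by omega
        rcases hk01 with rfl | rfl
        · exact h01 (Or.inl hk)
        · exact h01 (Or.inr hk)
      left; rw [hgi, polIdx, if_pos hk2]
  -- decomposition of the covered set
  have hdecomp : ({p ∈ P | ∃ L ∈ Ls, p ∈ L} : Set (ℝ × ℝ)) ⊆
      (⋃ i ∈ Finset.univ, Uv i) ∪ (cpt '' SatS ∪
        ((fun i => cpt (clofIdx tri i 2)) '' (MisF : Set (Fin n)) ∪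
          ⋃ L ∈ Small, (L ∩ P))) := by
    rintro x ⟨hxP, L, hLs, hxL⟩
    by_cases hsmall : (L ∩ P).ncard ≤ 2
    · exact Or.inr (Or.inr (Or.inr (Set.mem_biUnion
        (Finset.mem_coe.2 (Finset.mem_filter.2 ⟨hLs, hsmall⟩)) ⟨hxL, hxP⟩)))
    · obtain ⟨i, k, heq⟩ := line_classify hinj hcol (hlines L hLs) (not_le.mp hsmall)
      have hselik : sel i k := ⟨L, hLs, heq⟩
      have hx : x ∈ trip vpt cpt tri pos2 i k := heq ▸ ⟨hxL, hxP⟩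
      rcases hx with rfl | hx
      · rcases hmatch i k hselik with hm | ⟨rfl, hmis⟩
        · refine Or.inr (Or.inl ⟨clofIdx tri i k, ?_, rfl⟩)
          exact satisfies_of_occLit (occ_lit hvar i k) hm
        · exact Or.inr (Or.inr (Or.inl ⟨i, hmis, rfl⟩))
      · exact Or.inl (Set.mem_biUnion (Finset.mem_univ i) ⟨k, hselik, hx⟩)
  -- finiteness
  have hUvfin : ∀ i, (Uv i).Finite := by
    intro i
    refine (config_finite (vpt := vpt) (cpt := cpt)).subset ?_
    rintro x ⟨k, -, rfl | rfl⟩ <;> exact vpart_mem_config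
  -- cardinality of the union decomposition
  have hn1 : (⋃ i ∈ Finset.univ, Uv i).ncard ≤ ∑ i : Fin n, (Uv i).ncard :=
    ncard_biUnion_le Finset.univ Uv hUvfin
  have hn2 : (cpt '' SatS).ncard ≤ SatS.ncard := Set.ncard_image_le (Set.toFinite _)
  have hn3 : ((fun i => cpt (clofIdx tri i 2)) '' (MisF : Set (Fin n))).ncard ≤ MisF.card := by
    refine le_trans (Set.ncard_image_le (Set.toFinite _)) ?_
    rw [Set.ncard_coe_finset]
  have hn4 : (⋃ L ∈ Small, (L ∩ P)).ncard ≤ 2 * Small.card := by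
    refine le_trans (ncard_biUnion_le Small (fun L => L ∩ P)
      (fun L => (config_finite (vpt := vpt) (cpt := cpt)).subset Set.inter_subset_right)) ?_
    rw [mul_comm]
    refine le_trans (Finset.sum_le_sum (fun L hL => (Finset.mem_filter.1 hL).2)) ?_
    simp [Finset.sum_const, smul_eq_mul]
  -- per-variable bound
  have hperv : ∀ i : Fin n, (Uv i).ncard + (if i ∈ MisF then 1 else 0) ≤
      2 * (Finset.univ.filter (fun k : Fin 3 => sel i k)).card := by
    intro i
    have hmem : (i ∈ MisF) ↔ (sel i 2 ∧ (sel i 0 ∨ sel i 1)) := by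
      rw [hMisF, Finset.mem_filter]
      simp
    have := per_var_bound (vpt i) (pos2 i) (sel i)
    simp only [hmem]
    convert this using 3 <;> rfl
  -- sum over selected triples
  set SelF : Finset (Fin n × Fin 3) :=
    Finset.univ.filter (fun p : Fin n × Fin 3 => sel p.1 p.2) with hSelF
  have hsum : ∑ i : Fin n, (Finset.univ.filter (fun k : Fin 3 => sel i k)).card
      = SelF.card := by
    rw [hSelF, Finset.card_filter, Fintype.sum_prod_type]
    congr 1
    ext i
    rw [Finset.card_filter]
  -- SelF injects into Big
  have hSelBig : SelF.card ≤ Big.card := by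
    have hmap : ∀ p : Fin n × Fin 3, p ∈ SelF → ∃ L ∈ Big, L ∩ P = trip vpt cpt tri pos2 p.1 p.2 := by
      intro p hp
      have hsp : sel p.1 p.2 := (Finset.mem_filter.1 hp).2
      obtain ⟨L, hLs, hLP⟩ := hsp
      refine ⟨L, Finset.mem_filter.2 ⟨hLs, ?_⟩, hLP⟩
      have h3 : (L ∩ ConfigPoints vpt cpt).ncard = 3 := by
        have h4 : (L ∩ P).ncard = 3 := by rw [hLP]; exact trip_ncard hinj
        exact h4
      have h5 : (L ∩ P).ncard = 3 := by rw [hLP]; exact trip_ncard hinj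
      omega
    choose f hf1 hf2 using hmap
    refine Finset.card_le_card_of_injOn (fun p => if hp : p ∈ SelF then f p hp else ∅) ?_ ?_
    · intro p hp
      show (if hp' : p ∈ SelF then f p hp' else ∅) ∈ Big
      rw [dif_pos (Finset.mem_coe.1 hp)]
      exact hf1 p hp
    · intro p hp q hq hfe
      have hfe : f p hp = f q hq := by
        have e1 : (if hp' : p ∈ SelF then f p hp' else (∅ : Set (ℝ × ℝ))) = f p hp := dif_pos hp
        have e2 : (if hq' : q ∈ SelF then f q hq' else (∅ : Set (ℝ × ℝ))) = f q hq := dif_pos hq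
        rw [← e1, ← e2]; exact hfe
      have : trip vpt cpt tri pos2 p.1 p.2 = trip vpt cpt tri pos2 q.1 q.2 := by
        rw [← hf2 p hp, ← hf2 q hq, hfe]
      have h' := trip_injective hinj this
      exact Prod.ext h'.1 h'.2
  have hBS : Big.card + Small.card = 2 * n := by
    rw [hBig, hSmall, ← hcard, add_comm]
    exact Finset.card_filter_add_card_filter_not (p := fun L => (L ∩ P).ncard ≤ 2)
  -- MisF card as a sum
  have hMsum : MisF.card = ∑ i : Fin n, (if i ∈ MisF then 1 else 0) := by
    rw [Finset.card_filter]
    refine Finset.sum_congr rfl fun i _ => ?_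
    by_cases hm : i ∈ MisF
    · rw [if_pos hm, if_pos (Finset.mem_filter.1 hm).2]
    · rw [if_neg hm, if_neg]
      intro hc
      exact hm (Finset.mem_filter.2 ⟨Finset.mem_univ _, hc⟩)
  -- assemble
  have htot : ∑ i : Fin n, (Uv i).ncard + MisF.card ≤ 2 * SelF.card := by
    rw [hMsum, ← Finset.sum_add_distrib, ← hsum, Finset.mul_sum]
    exact Finset.sum_le_sum fun i _ => hperv i
  have hmain : ({p ∈ P | ∃ L ∈ Ls, p ∈ L} : Set (ℝ × ℝ)).ncard ≤
      ∑ i : Fin n, (Uv i).ncard + (SatS.ncard + (MisF.card + 2 * Small.card)) := by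
    refine le_trans (Set.ncard_le_ncard hdecomp ?_) ?_
    · refine Set.Finite.union ?_ (Set.Finite.union ((Set.toFinite _).image _)
        (Set.Finite.union ((Set.toFinite _).image _) ?_))
      · exact Set.Finite.biUnion (Finset.univ : Finset (Fin n)).finite_toSet fun i _ => hUvfin i
      · exact Set.Finite.biUnion Small.finite_toSet fun L _ =>
          (config_finite (vpt := vpt) (cpt := cpt)).subset Set.inter_subset_right
    · refine le_trans (Set.ncard_union_le _ _) ?_
      refine add_le_add hn1 ?_
      refine le_trans (Set.ncard_union_le _ _) ?_
      refine add_le_add hn2 ?_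
      exact le_trans (Set.ncard_union_le _ _) (add_le_add hn3 hn4)
  have hfinal : 2 * SelF.card + 2 * Small.card ≤ 4 * n := by omega
  omega

end Reverse

/-- There is an assignment satisfying at least `w` clauses iff there is a set of `2n`
lines covering at least `4n + w` points of the configuration. -/
theorem stmt_6 {n m : ℕ} (clause : Fin m → (Fin n × Bool) × (Fin n × Bool))
    (hsat : IsE3OccE2SAT clause)
    (vpt : Fin n → Fin 4 → ℝ × ℝ) (cpt : Fin m → ℝ × ℝ)
    (tri : Fin n → Fin m × Fin m × Fin m) (pos2 : Fin n → Bool)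
    (hconf : IsPointConfig clause vpt cpt tri pos2) (w : ℤ) :
    (∃ g : Fin n → Bool, w ≤ ({j : Fin m | Satisfies clause g j}.ncard : ℤ)) ↔
    ∃ Ls : Finset (Set (ℝ × ℝ)), Ls.card = 2 * n ∧ (∀ L ∈ Ls, IsLine L) ∧
      4 * (n : ℤ) + w ≤
        (({p ∈ ConfigPoints vpt cpt | ∃ L ∈ Ls, p ∈ L} : Set (ℝ × ℝ)).ncard : ℤ) := by
  obtain ⟨hinj, hvar, hcol⟩ := hconf
  obtain ⟨hds, hocc3, -⟩ := hsat
  constructor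
  · rintro ⟨g, hw⟩
    obtain ⟨Ls, hc, hl, hle⟩ := forward_dir hinj hvar hds hocc3 hcol g
    exact ⟨Ls, hc, hl, by omega⟩
  · rintro ⟨Ls, hc, hl, hle⟩
    obtain ⟨g, hg⟩ := reverse_dir hinj hvar hcol Ls hc hl
    exact ⟨g, by omega⟩
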